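/- arXiv:0801.1783 — 2 statements merged into one kernel-verified Lean document; each statement's English description precedes it below -/
import Mathlib

section
/- For every integer n ≥ 1, the language L_n is context-free, where L_n is the maximal subset of {0,1,◁_1,◁_2,…,◁_n}^* such that evaluating successively the erasers ◁_1, then ◁_2, …, then ◁_n (each evaluation being required to be defined, i.e. no eraser ever erases the empty word) sends every word of L_n to a word in 0^*1. -/
open Set MeasureTheory

/-! ### Discrete topology on `Option` (the alphabet `A ∪ {◁}`) -/

instance optionTopology (A : Type*) : TopologicalSpace (Option A) := ⊥
instance optionDiscrete (A : Type*) : DiscreteTopology (Option A) := ⟨rfl⟩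

/-! ### Finite-word eraser evaluation -/

/-- One step of the left-to-right backspace evaluation; the accumulator holds the
(reversed) surviving word, `none` meaning the evaluation is undefined. -/
def eraseStep {B : Type*} [DecidableEq B] (e : B) (acc : Option (List B)) (a : B) :
    Option (List B) :=
  acc.bind fun l =>
    if a = e then (match l with | [] => none | _ :: t => some t) else some (a :: l)

/-- `finErase e u` is `some (u^e)` if the evaluation of the eraser `e` in `u` is
defined, and `none` otherwise. -/
def finErase {B : Type*} [DecidableEq B] (e : B) (u : List B) : Option (List B) :=
  (u.foldl (eraseStep e) (some [])).map List.reverse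

/-- The length-`n` prefix `x[n]` of an infinite word. -/
def pre {B : Type*} (x : ℕ → B) (n : ℕ) : List B := (List.range n).map x

/-- The infinite word `y` is the limit of the sequence of words `s n`
(every finite prefix of `y` eventually stabilizes). -/
def LimitsTo {B : Type*} (s : ℕ → ℕ → B) (y : ℕ → B) : Prop :=
  ∀ k : ℕ, ∃ N : ℕ, ∀ p ≥ N, ∀ i < k, s p i = y i

/-- `ErasesTo e x y` expresses that `x^e` is defined, infinite and equal to `y`:
all prefix evaluations `(x[p])^e` are defined, and for every `k` the length-`k`
prefix of `(x[p])^e` is eventually the length-`k` prefix of `y`. -/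
def ErasesTo {B : Type*} [DecidableEq B] (e : B) (x y : ℕ → B) : Prop :=
  (∀ n, (finErase e (pre x n)).isSome) ∧
  ∀ k : ℕ, ∃ N : ℕ, ∀ p ≥ N, ∀ l, finErase e (pre x p) = some l → l.take k = pre y k

/-- `X^≈ ⊆ (A ∪ {◁})^ω`, the eraser symbol `◁` being coded by `none`. -/
def ApproxSet {A : Type*} [DecidableEq A] (X : Set (ℕ → A)) : Set (ℕ → Option A) :=
  {x | ∃ y : ℕ → A, ErasesTo (none : Option A) x (fun i => some (y i)) ∧ y ∈ X}

/-! ### Wadge reducibility -/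

/-- `S ≤_W T` : `S` is the preimage of `T` under some continuous map. -/
def WadgeLE {X Y : Type*} [TopologicalSpace X] [TopologicalSpace Y]
    (S : Set X) (T : Set Y) : Prop :=
  ∃ f : X → Y, Continuous f ∧ S = f ⁻¹' T

/-! ### The Borel hierarchy (finite levels and level `ω`) -/

/-- The class `Σ^0_n` for finite `n ≥ 1`: `Σ^0_1` is the class of open sets and,
for `ξ > 1`, `Σ^0_ξ` is the class of countable unions of sets each of which is the
complement of a `Σ^0_{ξ'}` set for some `1 ≤ ξ' < ξ`. -/
def SigmaFin (X : Type*) [TopologicalSpace X] : ℕ → Set (Set X)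
  | 0 => ∅
  | 1 => {s | IsOpen s}
  | (n+2) => {s | ∃ (f : ℕ → Set X) (m : ℕ → Fin (n+2)),
      (∀ k, 1 ≤ (m k : ℕ) ∧ (f k)ᶜ ∈ SigmaFin X (m k)) ∧ s = ⋃ k, f k}
  termination_by n => n
  decreasing_by exact (m k).isLt

/-- `Π^0_n` : complements of `Σ^0_n` sets. -/
def PiFin (X : Type*) [TopologicalSpace X] (n : ℕ) : Set (Set X) :=
  {s | sᶜ ∈ SigmaFin X n}

/-- `Δ^0_n`. -/
def DeltaFin (X : Type*) [TopologicalSpace X] (n : ℕ) : Set (Set X) :=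
  SigmaFin X n ∩ PiFin X n

/-- `Σ^0_ω` : countable unions of sets each in some `Π^0_{ξ'}` with `1 ≤ ξ' < ω`. -/
def SigmaOmega (X : Type*) [TopologicalSpace X] : Set (Set X) :=
  {s | ∃ (f : ℕ → Set X) (m : ℕ → ℕ),
      (∀ k, 1 ≤ m k ∧ f k ∈ PiFin X (m k)) ∧ s = ⋃ k, f k}

/-- `Π^0_ω` : complements of `Σ^0_ω` sets. -/
def PiOmega (X : Type*) [TopologicalSpace X] : Set (Set X) :=
  {s | sᶜ ∈ SigmaOmega X}

/-- `Δ^0_ω = Σ^0_ω ∩ Π^0_ω`. -/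
def DeltaOmega (X : Type*) [TopologicalSpace X] : Set (Set X) :=
  SigmaOmega X ∩ PiOmega X

/-- `S ⊆ A^ω` is `Π^0_n`-complete: it is `Π^0_n` and every `Π^0_n` subset of a space
of infinite words over a finite alphabet (with the discrete topology) Wadge-reduces
to it. -/
def PiFinComplete {A : Type*} [TopologicalSpace A] (n : ℕ) (S : Set (ℕ → A)) : Prop :=
  S ∈ PiFin (ℕ → A) n ∧
    ∀ (B : Type) [Fintype B] [TopologicalSpace B] [DiscreteTopology B],
      ∀ T : Set (ℕ → B), T ∈ PiFin (ℕ → B) n → WadgeLE T S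
/-! ### The alphabet `{0,1} ∪ {◁_n : 0 < n < ω}` and iterated erasing -/

/-- The alphabet `{0,1} ∪ {◁_n : 0 < n < ω}` : `Sum.inl b` is the binary letter `b`
(`false` for `0`, `true` for `1`) and `Sum.inr k` is the eraser `◁_{k+1}`. -/
abbrev Letter : Type := Bool ⊕ ℕ

/-- The binary letter `0` or `1` viewed in the extended alphabet. -/
def ltr (b : Bool) : Letter := Sum.inl b

/-- The eraser `◁_{k+1}`. -/
def er (k : ℕ) : Letter := Sum.inr k

/-- `X^{≈∞}` for `X ⊆ {0,1}^ω` : those `x` such that each successive eraser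
evaluation `x_n = (((x^{◁_1})^{◁_2})^…)^{◁_n}` is defined and infinite, and the
limit of the `x_n` is defined, infinite, and belongs to `X`. -/
def InfEraseSet (X : Set (ℕ → Bool)) : Set (ℕ → Letter) :=
  {x | ∃ s : ℕ → (ℕ → Letter),
        s 0 = x ∧ (∀ n : ℕ, ErasesTo (er n) (s n) (s (n + 1))) ∧
        ∃ y : ℕ → Bool, y ∈ X ∧ LimitsTo s (fun i => ltr (y i))}

open Classical in
/-- `f(x) = x^◁` if `x^◁` is defined and infinite, and `f(x) = 0^ω` otherwise
(the eraser `◁` is coded by `none`, and `z` plays the role of the letter `0`). -/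
noncomputable def eraseFun {A : Type*} [DecidableEq A] (z : A) (x : ℕ → Option A) :
    ℕ → A :=
  if h : ∃ y : ℕ → A, ErasesTo (none : Option A) x (fun i => some (y i)) then h.choose
  else fun _ => z

open Classical in
/-- `f_{k+1}(x) = x^{◁_{k+1}}` if this is defined and infinite, `0^ω` otherwise. -/
noncomputable def fStep (k : ℕ) (x : ℕ → Letter) : ℕ → Letter :=
  if h : ∃ y : ℕ → Letter, ErasesTo (er k) x y then h.choose else fun _ => ltr false

/-- `fFun 0 = id` and `fFun (k+1) = f_{k+1}`. -/
noncomputable def fFun : ℕ → (ℕ → Letter) → (ℕ → Letter)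
  | 0 => id
  | (k+1) => fStep k

/-- `fIter n = f_n ∘ … ∘ f_1` (with `fIter 0 = id`). -/
noncomputable def fIter : ℕ → (ℕ → Letter) → (ℕ → Letter)
  | 0 => id
  | (n+1) => fun x => fStep n (fIter n x)

open Classical in
/-- `f_∞(x) = lim_{n<ω} (f_n ∘ … ∘ f_1)(x)` if this limit is defined and infinite
(and over `{0,1}`), and `f_∞(x) = 0^ω` otherwise. -/
noncomputable def fInf (x : ℕ → Letter) : ℕ → Bool :=
  if h : ∃ y : ℕ → Bool, LimitsTo (fun n => fIter n x) (fun i => ltr (y i)) then h.choose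
  else fun _ => false

/-- The set of infinite binary words containing infinitely many `1`s. -/
def InfManyOnes : Set (ℕ → Bool) := {y | {i | y i = true}.Infinite}
/-! ### The languages `L_n`, `L_∞`, `W`, and `ω`-powers -/

/-- Successive evaluation of the erasers `◁_1, …, ◁_n` (coded by
`Sum.inr 0, …, Sum.inr (n-1)`) on a finite word over `{0,1,◁_1,…,◁_n}`;
`none` if some evaluation is undefined. -/
def eraseChain (n : ℕ) (u : List (Bool ⊕ Fin n)) : Option (List (Bool ⊕ Fin n)) :=
  (List.finRange n).foldl (fun acc i => acc.bind (finErase (Sum.inr i))) (some u)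

/-- The language `L_n ⊆ {0,1,◁_1,…,◁_n}^*`: the words whose successive eraser
evaluations (first `◁_1`, then `◁_2`, …, then `◁_n`, each being defined) yield a
word in `0^*1`. -/
def Lword (n : ℕ) : Language (Bool ⊕ Fin n) :=
  {u | ∃ v, eraseChain n u = some v ∧
        ∃ k : ℕ, v = List.replicate k (Sum.inl false) ++ [Sum.inl true]}

/-- The eight-letter alphabet `{0, 1, α, B, C, D, E, β}`, coded as
`0, 1, 2, 3, 4, 5, 6, 7` respectively. -/
abbrev Gam : Type := Fin 8

/-- The code `α B^j C^j D^j E^j β` of the eraser `◁_j`. -/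
def eraserCode (j : ℕ) : List Gam :=
  (2 : Gam) :: (List.replicate j (3 : Gam) ++ List.replicate j (4 : Gam) ++
    List.replicate j (5 : Gam) ++ List.replicate j (6 : Gam) ++ [(7 : Gam)])

/-- Encoding of a letter of `{0,1,◁_1,…,◁_n}` over `{0, 1, α, B, C, D, E, β}` :
binary letters are kept, and `◁_j` is replaced by its code. -/
def encLetter {n : ℕ} : Bool ⊕ Fin n → List Gam
  | Sum.inl false => [(0 : Gam)]
  | Sum.inl true => [(1 : Gam)]
  | Sum.inr i => eraserCode ((i : ℕ) + 1)

/-- `L_∞ = ⋃_{n<ω} L_n`, with each eraser replaced by its code. -/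
def Linf : Language Gam :=
  {w | ∃ n : ℕ, ∃ u ∈ Lword n, w = (u.map encLetter).flatten}

/-- A wrong code: a word beginning with `α` and ending with `β` which is not of
the form `α B^j C^j D^j E^j β` for any `j ≥ 1`. -/
def IsWrongCode (v : List Gam) : Prop :=
  v.head? = some (2 : Gam) ∧ v.getLast? = some (7 : Gam) ∧ ¬ ∃ j ≥ 1, v = eraserCode j

/-- `W` : the finite words over `{0, 1, α, B, C, D, E, β}` containing (as a
subword, i.e. an infix) an occurrence of a wrong code. -/
def Wlang : Language Gam := {w | ∃ v, IsWrongCode v ∧ v <:+: w}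

/-- `l` is a prefix of the infinite word `x`. -/
def IsPrefixOfWord {A : Type*} (l : List A) (x : ℕ → A) : Prop :=
  l = (List.range l.length).map x

/-- The `ω`-power `V^ω = {u_1 u_2 … : ∀ n, u_n ∈ V \ {ε}}` of a language of
finite words. -/
def omegaPower {A : Type*} (V : Language A) : Set (ℕ → A) :=
  {x | ∃ u : ℕ → List A, (∀ n, u n ∈ V ∧ u n ≠ []) ∧
        ∀ n, IsPrefixOfWord (((List.range n).map u).flatten) x}

/-- The finite word `v` occurs in the infinite word `x` at position `i`. -/
def OccursAt {A : Type*} [Inhabited A] (v : List A) (x : ℕ → A) (i : ℕ) : Prop :=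
  ∀ j < v.length, x (i + j) = v.getD j default

/-- A wrong code occurs in `x` at position `i`. -/
def WrongAt (x : ℕ → Gam) (i : ℕ) : Prop := ∃ v, IsWrongCode v ∧ OccursAt v x i

/-- The concatenation `w · y` of a finite word and an infinite word. -/
def wordAppend {A : Type*} (w : List A) (y : ℕ → A) : ℕ → A :=
  fun i => if h : i < w.length then w.get ⟨i, h⟩ else y (i - w.length)

/-- `U · Z = {u y : u ∈ U, y ∈ Z}` for `U` a set of finite words and `Z` a set of
infinite words. -/
def concatSet {A : Type*} (U : Language A) (Z : Set (ℕ → A)) : Set (ℕ → A) :=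
  {x | ∃ u ∈ U, ∃ y ∈ Z, x = wordAppend u y}

/-- The language `V = L_∞ ∪ W`. -/
def Vlang : Language Gam := {w | w ∈ Linf ∨ w ∈ Wlang}


namespace Eraser

variable {B : Type*} [DecidableEq B] {e : B}

@[simp] lemma eraseStep_none (a : B) : eraseStep e none a = none := rfl

lemma eraseStep_self (l : List B) :
    eraseStep e (some l) e = (match l with | [] => none | _ :: t => some t) := by
  simp [eraseStep]

@[simp] lemma eraseStep_self_nil : eraseStep e (some []) e = none := by
  simp [eraseStep]

@[simp] lemma eraseStep_self_cons (b : B) (t : List B) :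
    eraseStep e (some (b :: t)) e = some t := by
  simp [eraseStep]

@[simp] lemma eraseStep_ne {a : B} (h : a ≠ e) (l : List B) :
    eraseStep e (some l) a = some (a :: l) := by
  simp [eraseStep, h]

@[simp] lemma foldl_none (u : List B) : u.foldl (eraseStep e) none = none := by
  induction u with
  | nil => rfl
  | cons a u ih => simpa using ih

lemma stack_extend : ∀ (u : List B) (m m' l : List B),
    u.foldl (eraseStep e) (some m) = some m' →
    u.foldl (eraseStep e) (some (m ++ l)) = some (m' ++ l) := by
  intro u
  induction u with
  | nil =>
    intro m m' l h
    simp only [List.foldl_nil, Option.some.injEq] at h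
    simp [h]
  | cons a u ih =>
    intro m m' l h
    by_cases hae : a = e
    · subst hae
      match m with
      | [] => simp at h
      | b :: t =>
        simp only [List.foldl_cons, eraseStep_self_cons] at h
        simpa using ih t m' l h
    · simp only [List.foldl_cons, eraseStep_ne hae] at h ⊢
      exact ih (a :: m) m' l h

/-- If the run from stack `t ++ [b]` never empties the stack, then `b` at the
bottom is never touched and can be removed. -/
lemma drop_bot : ∀ (u : List B) (t m : List B) (b : B),
    u.foldl (eraseStep e) (some (t ++ [b])) = some m →
    (∀ p, p <+: u → p.foldl (eraseStep e) (some (t ++ [b])) ≠ some []) →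
    ∃ m', m = m' ++ [b] ∧ u.foldl (eraseStep e) (some t) = some m' := by
  intro u
  induction u with
  | nil =>
    intro t m b h _
    simp only [List.foldl_nil, Option.some.injEq] at h
    exact ⟨t, h.symm, rfl⟩
  | cons a u ih =>
    intro t m b h hne
    by_cases hae : a = e
    · subst hae
      match t with
      | [] =>
        exfalso
        exact hne [a] ⟨u, rfl⟩ (by simp)
      | c :: t' =>
        simp only [List.cons_append, List.foldl_cons, eraseStep_self_cons] at h ⊢
        obtain ⟨m', hm, hrun⟩ := ih t' m b h (fun p hp => by
          have := hne (a :: p) (List.cons_prefix_cons.mpr ⟨rfl, hp⟩)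
          simpa using this)
        exact ⟨m', hm, hrun⟩
    · simp only [List.foldl_cons, eraseStep_ne hae] at h ⊢
      obtain ⟨m', hm, hrun⟩ := ih (a :: t) m b (by simpa using h) (fun p hp => by
        have := hne (a :: p) (List.cons_prefix_cons.mpr ⟨rfl, hp⟩)
        simpa [eraseStep_ne hae] using this)
      exact ⟨m', hm, hrun⟩

lemma finErase_eq_some_iff {u v : List B} :
    finErase e u = some v ↔ u.foldl (eraseStep e) (some []) = some v.reverse := by
  unfold finErase
  cases h : u.foldl (eraseStep e) (some []) with
  | none => simp
  | some m =>
    simp only [Option.map_some, Option.some.injEq]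
    constructor
    · rintro rfl; simp
    · rintro rfl; simp

lemma finErase_concat {u v u' v' : List B}
    (hu : finErase e u = some u') (hv : finErase e v = some v') :
    finErase e (u ++ v) = some (u' ++ v') := by
  rw [finErase_eq_some_iff] at hu hv ⊢
  rw [List.foldl_append, hu]
  have := stack_extend (e := e) v [] v'.reverse u'.reverse hv
  simpa using this

@[simp] lemma finErase_nil : finErase e ([] : List B) = some [] := rfl

lemma foldl_avoid : ∀ (u m : List B), e ∉ u →
    u.foldl (eraseStep e) (some m) = some (u.reverse ++ m) := by
  intro u
  induction u with
  | nil => simp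
  | cons a u ih =>
    intro m hmem
    have hae : a ≠ e := fun h => hmem (h ▸ List.mem_cons_self (a := a) (l := u))
    simp only [List.foldl_cons, eraseStep_ne hae]
    rw [ih (a :: m) (fun h => hmem (List.mem_cons_of_mem a h))]
    simp

lemma finErase_avoid {u : List B} (h : e ∉ u) : finErase e u = some u := by
  rw [finErase_eq_some_iff, foldl_avoid u [] h]
  simp

lemma foldl_mem : ∀ (u m m' : List B), u.foldl (eraseStep e) (some m) = some m' →
    ∀ x ∈ m', x ∈ m ∨ x ∈ u := by
  intro u
  induction u with
  | nil =>
    intro m m' h x hx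
    simp only [List.foldl_nil, Option.some.injEq] at h
    exact Or.inl (h ▸ hx)
  | cons a u ih =>
    intro m m' h x hx
    by_cases hae : a = e
    · subst hae
      match m with
      | [] => simp at h
      | b :: t =>
        simp only [List.foldl_cons, eraseStep_self_cons] at h
        rcases ih t m' h x hx with h' | h'
        · exact Or.inl (List.mem_cons_of_mem b h')
        · exact Or.inr (List.mem_cons_of_mem _ h')
    · simp only [List.foldl_cons, eraseStep_ne hae] at h
      rcases ih (a :: m) m' h x hx with h' | h'
      · rcases List.mem_cons.1 h' with rfl | h''
        · exact Or.inr List.mem_cons_self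
        · exact Or.inl h''
      · exact Or.inr (List.mem_cons_of_mem _ h')

lemma finErase_mem {u v : List B} (h : finErase e u = some v) :
    ∀ x ∈ v, x ∈ u := by
  rw [finErase_eq_some_iff] at h
  intro x hx
  rcases foldl_mem u [] v.reverse h x (by simpa using hx) with h' | h'
  · simp at h'
  · exact h'

lemma foldl_not_mem_self : ∀ (u m m' : List B),
    u.foldl (eraseStep e) (some m) = some m' → e ∉ m → e ∉ m' := by
  intro u
  induction u with
  | nil =>
    intro m m' h hm
    simp only [List.foldl_nil, Option.some.injEq] at h
    exact h ▸ hm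
  | cons a u ih =>
    intro m m' h hm
    by_cases hae : a = e
    · subst hae
      match m with
      | [] => simp at h
      | b :: t =>
        simp only [List.foldl_cons, eraseStep_self_cons] at h
        exact ih t m' h (fun hc => hm (List.mem_cons_of_mem b hc))
    · simp only [List.foldl_cons, eraseStep_ne hae] at h
      refine ih (a :: m) m' h ?_
      intro hc
      rcases List.mem_cons.1 hc with h' | h'
      · exact hae h'.symm
      · exact hm h'

lemma finErase_not_mem_self {u v : List B} (h : finErase e u = some v) : e ∉ v := by
  rw [finErase_eq_some_iff] at h
  intro hc
  exact foldl_not_mem_self u [] v.reverse h (by simp) (by simpa using hc)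

end Eraser

namespace Eraser

variable {B : Type*} [DecidableEq B]

/-- Dyck-like words for the eraser `e`. -/
inductive Dy (e : B) : List B → Prop
  | nil : Dy e []
  | node (a : B) (ha : a ≠ e) {d₁ d₂ : List B} (h₁ : Dy e d₁) (h₂ : Dy e d₂) :
      Dy e (a :: (d₁ ++ e :: d₂))

variable {e : B}

lemma finErase_node {a : B} (ha : a ≠ e) {u v : List B}
    (hu : finErase e u = some []) (hv : finErase e v = some []) :
    finErase e (a :: (u ++ e :: v)) = some [] := by
  rw [finErase_eq_some_iff] at hu hv ⊢
  have e1 : (a :: (u ++ e :: v)) = (a :: u) ++ ([e] ++ v) := by simp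
  have e2 : (a :: u).foldl (eraseStep e) (some []) = some [a] := by
    rw [List.foldl_cons, eraseStep_ne ha]
    have := stack_extend u [] [] [a] (by simpa using hu)
    simpa using this
  rw [e1, List.foldl_append, List.foldl_append, e2]
  simp only [List.foldl_cons, eraseStep_self_cons, List.foldl_nil]
  simpa using hv

lemma Dy.finErase_eq (h : Dy e d) : finErase e d = some [] := by
  induction h with
  | nil => rfl
  | node a ha h₁ h₂ ih₁ ih₂ => exact finErase_node ha ih₁ ih₂

/-- Key structural converse: a word erasing to `[]` is a Dyck word. -/
theorem dy_of_finErase : ∀ d : List B, finErase e d = some [] → Dy e d := by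
  suffices H : ∀ N, ∀ d : List B, d.length ≤ N → finErase e d = some [] → Dy e d by
    intro d hd; exact H d.length d le_rfl hd
  intro N
  induction N with
  | zero =>
    intro d hd h
    rw [Nat.le_zero, List.length_eq_zero_iff] at hd
    subst hd; exact Dy.nil
  | succ N IH =>
    intro d hd h
    match d with
    | [] => exact Dy.nil
    | a :: d' =>
      rw [finErase_eq_some_iff] at h
      simp only [List.reverse_nil] at h
      have ha : a ≠ e := by
        rintro rfl
        simp only [List.foldl_cons, eraseStep_self_nil, foldl_none] at h
        cases h
      rw [List.foldl_cons, eraseStep_ne ha] at h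
      -- find the first time the stack `[a]` empties
      have hex : ∃ i, (d'.take i).foldl (eraseStep e) (some [a]) = some [] := by
        exact ⟨d'.length, by simpa using h⟩
      classical
      set i₀ := Nat.find hex with hi₀
      have hPi₀ : (d'.take i₀).foldl (eraseStep e) (some [a]) = some [] :=
        Nat.find_spec hex
      have hi₀le : i₀ ≤ d'.length := Nat.find_min' hex (by simpa using h)
      have hi₀pos : 0 < i₀ := by
        rcases Nat.eq_zero_or_pos i₀ with h0 | h0
        · rw [h0] at hPi₀; simp at hPi₀
        · exact h0
      obtain ⟨i, hii⟩ : ∃ i, i₀ = i + 1 := ⟨i₀ - 1, (Nat.succ_pred_eq_of_pos hi₀pos).symm⟩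
      rw [hii] at hPi₀ hi₀le
      have hilt : i < d'.length := Nat.lt_of_lt_of_le (Nat.lt_succ_self i) hi₀le
      have htake : d'.take (i + 1) = d'.take i ++ [d'[i]] := by
        rw [List.take_succ, List.getElem?_eq_getElem hilt]
        rfl
      set u1 := d'.take i with hu1
      rw [htake, List.foldl_append] at hPi₀
      cases ho : u1.foldl (eraseStep e) (some [a]) with
      | none => rw [ho] at hPi₀; simp at hPi₀
      | some s =>
        rw [ho] at hPi₀
        simp only [List.foldl_cons, List.foldl_nil] at hPi₀
        have hce : d'[i] = e := by
          by_contra hcne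
          rw [eraseStep_ne hcne] at hPi₀
          simp at hPi₀
        rw [hce] at htake hPi₀
        obtain ⟨x, rfl⟩ : ∃ x, s = [x] := by
          match s with
          | [] => simp at hPi₀
          | x :: t =>
            rw [eraseStep_self_cons] at hPi₀
            injection hPi₀ with ht
            exact ⟨x, by rw [ht]⟩
        -- minimality gives no empty-stack prefix
        have hmin : ∀ p, p <+: u1 → p.foldl (eraseStep e) (some [a]) ≠ some [] := by
          intro p hp hcon
          have hple : p.length ≤ i := by
            have := hp.length_le
            simpa [hu1, hilt.le] using this
          have hpeq : p = d'.take p.length := by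
            have h1 : p = u1.take p.length := List.prefix_iff_eq_take.mp hp
            have h2 : u1.take p.length = d'.take p.length := by
              rw [hu1, List.take_take, min_eq_left hple]
            exact h1.trans h2
          exact Nat.find_min hex
            (show p.length < Nat.find hex by rw [← hi₀, hii]; omega) (hpeq ▸ hcon)
        obtain ⟨m', hm', hrun⟩ := drop_bot u1 [] [x] a (by simpa using ho) hmin
        obtain rfl : m' = [] := by
          match m' with
          | [] => rfl
          | y :: t => simp at hm'
        have hDy1 : Dy e u1 := by
          refine IH u1 ?_ (by rw [finErase_eq_some_iff]; simpa using hrun)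
          have h1 : u1.length = i := by simp [hu1, List.length_take, hilt.le]
          have h2 : d'.length + 1 ≤ N + 1 := by simpa using hd
          omega
        -- the remainder
        set w2 := d'.drop (i + 1) with hw2
        have hsplit : d' = u1 ++ e :: w2 := by
          conv_lhs => rw [← List.take_append_drop (i + 1) d']
          rw [htake]
          simp [hw2]
        have hxa : x = a := by simpa using hm'
        rw [hxa] at ho
        have hrun2 : w2.foldl (eraseStep e) (some []) = some [] := by
          rw [hsplit, List.foldl_append, ho] at h
          simpa using h
        have hDy2 : Dy e w2 := by
          refine IH w2 ?_ (by rw [finErase_eq_some_iff]; simpa using hrun2)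
          have hlen : d'.length + 1 ≤ N + 1 := by simpa using hd
          have hw2l : w2.length = d'.length - (i + 1) := by simp [hw2]
          omega
        rw [hsplit]
        exact Dy.node a ha hDy1 hDy2

end Eraser

namespace Eraser

variable {B : Type*} [DecidableEq B] {e : B}

/-- Interleaving of a word `v` (no block before the first letter). -/
inductive In (e : B) : List B → List B → Prop
  | nil : In e [] []
  | cons (a : B) (ha : a ≠ e) {d u v : List B} (hd : Dy e d) (h : In e u v) :
      In e (a :: (d ++ u)) (a :: v)

/-- Structure theorem: erasure decomposes a word into Dyck blocks interleaved
with the surviving letters. -/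
theorem finErase_structure : ∀ w v : List B, finErase e w = some v →
    ∃ d w', Dy e d ∧ In e w' v ∧ w = d ++ w' := by
  suffices H : ∀ N, ∀ w v : List B, w.length ≤ N → finErase e w = some v →
      ∃ d w', Dy e d ∧ In e w' v ∧ w = d ++ w' by
    intro w v hw; exact H w.length w v le_rfl hw
  intro N
  induction N with
  | zero =>
    intro w v hw h
    rw [Nat.le_zero, List.length_eq_zero_iff] at hw
    subst hw
    obtain rfl : v = [] := by
      rw [finErase_eq_some_iff] at h
      simpa using congrArg (Option.map List.reverse) h.symm
    exact ⟨[], [], Dy.nil, In.nil, rfl⟩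
  | succ N IH =>
    intro w v hw h
    match v with
    | [] =>
      exact ⟨w, [], dy_of_finErase w h, In.nil, by simp⟩
    | b :: v' =>
      rw [finErase_eq_some_iff] at h
      classical
      set P : ℕ → Prop := fun i => (w.take i).foldl (eraseStep e) (some []) = some []
        with hP
      have hP0 : P 0 := by simp [hP]
      set i := Nat.findGreatest P w.length with hi
      have hPi : P i := Nat.findGreatest_spec (Nat.zero_le _) hP0
      have hile : i ≤ w.length := Nat.findGreatest_le _
      have hgr : ∀ m, i < m → m ≤ w.length → ¬ P m := by
        intro m h1 h2
        exact Nat.findGreatest_is_greatest (hi ▸ h1) h2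
      have hilt : i < w.length := by
        rcases Nat.lt_or_ge i w.length with h' | h'
        · exact h'
        · exfalso
          have : i = w.length := le_antisymm hile h'
          rw [hP, this, List.take_length] at hPi
          rw [hPi] at h
          simp at h
      have hdrop : w.drop i = w[i] :: w.drop (i + 1) := List.drop_eq_getElem_cons hilt
      have hsplit : w = w.take i ++ w[i] :: w.drop (i + 1) := by
        conv_lhs => rw [← List.take_append_drop i w]
        rw [hdrop]
      have hrest : (w[i] :: w.drop (i + 1)).foldl (eraseStep e) (some [])
          = some (b :: v').reverse := by
        rw [hsplit, List.foldl_append] at h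
        rw [hP] at hPi
        rw [hPi] at h
        exact h
      have hbe : w[i] ≠ e := by
        intro hc
        rw [List.foldl_cons, hc, eraseStep_self_nil, foldl_none] at hrest
        cases hrest
      rw [List.foldl_cons, eraseStep_ne hbe] at hrest
      -- maximality: the stack never empties again
      have hmin : ∀ p, p <+: w.drop (i + 1) →
          p.foldl (eraseStep e) (some [w[i]]) ≠ some [] := by
        intro p hp hcon
        have hple : p.length ≤ w.length - (i + 1) := by
          have := hp.length_le
          simpa using this
        have htk : w.take (i + 1 + p.length) = w.take i ++ w[i] :: p := by
          conv_lhs => rw [hsplit]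
          rw [List.take_append]
          have hlt : (w.take i).length = i := by
            simp [List.length_take, hilt.le]
          rw [hlt]
          rw [List.take_take]
          have h2 : min (i + 1 + p.length) i = i := min_eq_right (by omega)
          have h1 : i + 1 + p.length - i = p.length + 1 := by omega
          rw [h2, h1, List.take_succ_cons]
          congr 2
          exact (List.prefix_iff_eq_take.mp hp).symm
        have hPi' : (w.take i).foldl (eraseStep e) (some []) = some [] := hPi
        have hPm : P (i + 1 + p.length) := by
          show (w.take (i + 1 + p.length)).foldl (eraseStep e) (some []) = some []
          rw [htk, List.foldl_append, hPi', List.foldl_cons, eraseStep_ne hbe]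
          exact hcon
        refine hgr (i + 1 + p.length) (by omega) ?_ hPm
        omega
      obtain ⟨m', hm', hrun⟩ :=
        drop_bot (w.drop (i + 1)) [] (b :: v').reverse w[i] (by simpa using hrest) hmin
      have hwib : w[i] = b ∧ m' = v'.reverse := by
        have : (b :: v').reverse = v'.reverse ++ [b] := by simp
        rw [this] at hm'
        have := List.append_inj' hm' rfl
        exact ⟨by simpa using this.2.symm, this.1.symm⟩
      obtain ⟨hwib1, rfl⟩ := hwib
      have hfe : finErase e (w.drop (i + 1)) = some v' := by
        rw [finErase_eq_some_iff]
        exact hrun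
      obtain ⟨d2, w2, hd2, hin2, hsplit2⟩ := IH (w.drop (i + 1)) v'
        (by simp; omega) hfe
      refine ⟨w.take i, b :: (d2 ++ w2), ?_, In.cons b (hwib1 ▸ hbe) hd2 hin2, ?_⟩
      · exact dy_of_finErase _ (by rw [finErase_eq_some_iff]; simpa using hPi)
      · conv_lhs => rw [hsplit, hwib1, hsplit2]

end Eraser

namespace Eraser

variable {B : Type*} [DecidableEq B]

/-- Sequential evaluation of a list of erasers. -/
def chainF (es : List B) (u : List B) : Option (List B) :=
  es.foldl (fun acc a => acc.bind (finErase a)) (some u)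

@[simp] lemma chainF_nil_es (u : List B) : chainF [] u = some u := rfl

lemma chainF_none (es : List B) :
    es.foldl (fun acc a => acc.bind (finErase a)) none = none := by
  induction es with
  | nil => rfl
  | cons a es ih => simpa using ih

lemma chainF_cons (a : B) (es : List B) (u : List B) :
    chainF (a :: es) u = (finErase a u).elim none (chainF es) := by
  unfold chainF
  rw [List.foldl_cons]
  cases h : finErase a u with
  | none => simp [h, chainF_none]
  | some v => simp [h]

lemma chainF_cons_some {a : B} {es : List B} {u v : List B}
    (h : finErase a u = some v) : chainF (a :: es) u = chainF es v := by
  rw [chainF_cons, h]; rfl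

lemma chainF_append (es₁ es₂ : List B) (u : List B) :
    chainF (es₁ ++ es₂) u = (chainF es₁ u).elim none (chainF es₂) := by
  induction es₁ generalizing u with
  | nil => simp
  | cons a es ih =>
    rw [List.cons_append, chainF_cons, chainF_cons]
    cases h : finErase a u with
    | none => simp [chainF_none]
    | some v => simp [ih]

lemma chainF_append_some {es₁ es₂ : List B} {u v : List B}
    (h : chainF es₁ u = some v) : chainF (es₁ ++ es₂) u = chainF es₂ v := by
  rw [chainF_append, h]; rfl

@[simp] lemma chainF_nil_word (es : List B) : chainF es ([] : List B) = some [] := by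
  induction es with
  | nil => rfl
  | cons a es ih => rw [chainF_cons_some (finErase_nil)]; exact ih

lemma chainF_concat {es : List B} {u v u' v' : List B}
    (hu : chainF es u = some u') (hv : chainF es v = some v') :
    chainF es (u ++ v) = some (u' ++ v') := by
  induction es generalizing u v with
  | nil =>
    simp only [chainF_nil_es, Option.some.injEq] at hu hv ⊢
    rw [hu, hv]
  | cons a es ih =>
    rw [chainF_cons] at hu hv
    cases h1 : finErase a u with
    | none => rw [h1] at hu; simp at hu
    | some u₁ =>
      cases h2 : finErase a v with
      | none => rw [h2] at hv; simp at hv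
      | some v₁ =>
        rw [h1] at hu; rw [h2] at hv
        simp only [Option.elim_some] at hu hv
        rw [chainF_cons_some (finErase_concat h1 h2)]
        exact ih hu hv

lemma chainF_avoid {es : List B} {u : List B} (h : ∀ a ∈ es, a ∉ u) :
    chainF es u = some u := by
  induction es with
  | nil => rfl
  | cons a es ih =>
    rw [chainF_cons_some (finErase_avoid (h a List.mem_cons_self))]
    exact ih (fun b hb => h b (List.mem_cons_of_mem a hb))

lemma chainF_mem {es : List B} {u v : List B} (h : chainF es u = some v) :
    ∀ x ∈ v, x ∈ u := by
  induction es generalizing u with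
  | nil =>
    simp only [chainF_nil_es, Option.some.injEq] at h
    subst h; exact fun x hx => hx
  | cons a es ih =>
    rw [chainF_cons] at h
    cases h1 : finErase a u with
    | none => rw [h1] at h; simp at h
    | some u₁ =>
      rw [h1] at h
      simp only [Option.elim_some] at h
      exact fun x hx => finErase_mem h1 x (ih h x hx)

lemma chainF_not_mem {es : List B} {u v : List B} (h : chainF es u = some v)
    {a : B} (ha : a ∈ es) : a ∉ v := by
  induction es generalizing u with
  | nil => simp at ha
  | cons b es ih =>
    rw [chainF_cons] at h
    cases h1 : finErase b u with
    | none => rw [h1] at h; simp at h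
    | some u₁ =>
      rw [h1] at h
      simp only [Option.elim_some] at h
      rcases List.mem_cons.1 ha with rfl | ha'
      · intro hc
        exact finErase_not_mem_self h1 (chainF_mem h a hc)
      · exact ih h ha'

end Eraser

namespace LwordCF

open Eraser

/-- The list of erasers `◁_1, …, ◁_n` in evaluation order. -/
def E (n : ℕ) : List (Bool ⊕ Fin n) := (List.finRange n).map Sum.inr

lemma eraseChain_eq (n : ℕ) (u : List (Bool ⊕ Fin n)) :
    eraseChain n u = chainF (E n) u := by
  unfold eraseChain chainF E
  rw [List.foldl_map]

@[simp] lemma length_E (n : ℕ) : (E n).length = n := by simp [E]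

lemma E_take_succ {n : ℕ} (k : ℕ) (hk : k < n) :
    (E n).take (k + 1) = (E n).take k ++ [Sum.inr ⟨k, hk⟩] := by
  rw [List.take_succ, List.getElem?_eq_getElem (by simpa using hk)]
  congr 1
  show [(E n)[k]'(by simpa using hk)] = _
  congr 1
  unfold E
  rw [List.getElem_map]
  congr 1
  simp [List.getElem_finRange]

lemma mem_E_take {n : ℕ} {i : Fin n} {k : ℕ} :
    Sum.inr i ∈ (E n).take k ↔ (i : ℕ) < k := by
  unfold E
  rw [← List.map_take, List.mem_map]
  constructor
  · rintro ⟨a, ha, hai⟩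
    have haeq : a = i := by injection hai
    rw [List.mem_take_iff_getElem] at ha
    obtain ⟨m, hm, hma⟩ := ha
    have : m < k := lt_of_lt_of_le hm (min_le_left _ _)
    have hmi : (i : ℕ) = m := by
      rw [← haeq, ← hma]; simp [List.getElem_finRange]
    omega
  · intro hik
    refine ⟨i, ?_, rfl⟩
    rw [List.mem_take_iff_getElem]
    refine ⟨(i : ℕ), ?_, ?_⟩
    · simp; omega
    · simp [List.getElem_finRange]

lemma mem_Lword_iff {n : ℕ} {u : List (Bool ⊕ Fin n)} :
    u ∈ Lword n ↔ ∃ k : ℕ,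
      chainF (E n) u = some (List.replicate k (Sum.inl false) ++ [Sum.inl true]) := by
  constructor
  · rintro ⟨v, hv, k, rfl⟩
    exact ⟨k, by rw [← eraseChain_eq]; exact hv⟩
  · rintro ⟨k, hk⟩
    exact ⟨_, by rw [eraseChain_eq]; exact hk, k, rfl⟩

/-- The intended language of the grammar nonterminals:
`GG n false j w` : `w` is generated by the nonterminal `D_j`;
`GG n true k w` : `w` is generated by the string of nonterminals `D_0 D_1 … D_{k-1}`. -/
inductive GG (n : ℕ) : Bool → ℕ → List (Bool ⊕ Fin n) → Prop
  | dnil (j : ℕ) : GG n false j []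
  | dcons (j : ℕ) (hj : j < n) (a : Bool ⊕ Fin n)
      (ha : ∀ i : Fin n, (i : ℕ) ≤ j → a ≠ Sum.inr i)
      {d w₁ d' w₂ : List (Bool ⊕ Fin n)} (hd : GG n true j d) (h₁ : GG n false j w₁)
      (hd' : GG n true j d') (h₂ : GG n false j w₂) :
      GG n false j (a :: (d ++ w₁ ++ Sum.inr ⟨j, hj⟩ :: (d' ++ w₂)))
  | snil : GG n true 0 []
  | scons (k : ℕ) (hk : k < n) {d r : List (Bool ⊕ Fin n)}
      (hd : GG n true k d) (hr : GG n false k r) : GG n true (k + 1) (d ++ r)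

/-- `Sig n k w v` : `w` is obtained from `v` by inserting a
`D_0 … D_{k-1}`-block after every letter. -/
inductive Sig (n : ℕ) (k : ℕ) : List (Bool ⊕ Fin n) → List (Bool ⊕ Fin n) → Prop
  | nil : Sig n k [] []
  | cons (a : Bool ⊕ Fin n) {b w v : List (Bool ⊕ Fin n)}
      (hb : GG n true k b) (h : Sig n k w v) : Sig n k (a :: (b ++ w)) (a :: v)

lemma gg_true_nil {n : ℕ} : ∀ k ≤ n, GG n true k [] := by
  intro k
  induction k with
  | zero => intro _; exact GG.snil
  | succ k ih =>
    intro hk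
    have := GG.scons k (by omega) (ih (by omega)) (GG.dnil k)
    simpa using this

lemma sig_zero {n : ℕ} (w : List (Bool ⊕ Fin n)) : Sig n 0 w w := by
  induction w with
  | nil => exact Sig.nil
  | cons a w ih => simpa using Sig.cons a GG.snil ih

lemma sig_split {n k : ℕ} {w v₁ v₂ : List (Bool ⊕ Fin n)}
    (h : Sig n k w (v₁ ++ v₂)) :
    ∃ w₁ w₂, w = w₁ ++ w₂ ∧ Sig n k w₁ v₁ ∧ Sig n k w₂ v₂ := by
  induction v₁ generalizing w with
  | nil => exact ⟨[], w, rfl, Sig.nil, by simpa using h⟩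
  | cons a v₁ ih =>
    rw [List.cons_append] at h
    cases h with
    | cons _ hb h' =>
      obtain ⟨w₁, w₂, rfl, hs₁, hs₂⟩ := ih h'
      exact ⟨a :: (_ ++ w₁), w₂, by simp, Sig.cons a hb hs₁, hs₂⟩

lemma sig_nil_inv {n k : ℕ} {w : List (Bool ⊕ Fin n)} (h : Sig n k w []) : w = [] := by
  cases h; rfl

lemma sig_cons_inv {n k : ℕ} {w v : List (Bool ⊕ Fin n)} {a : Bool ⊕ Fin n}
    (h : Sig n k w (a :: v)) :
    ∃ b w', GG n true k b ∧ Sig n k w' v ∧ w = a :: (b ++ w') := by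
  cases h with
  | cons _ hb h' => exact ⟨_, _, hb, h', rfl⟩

lemma dyck_lift {n k : ℕ} (hk : k < n) {d x : List (Bool ⊕ Fin n)}
    (hDy : Dy (Sum.inr (⟨k, hk⟩ : Fin n)) d)
    (hav : ∀ y ∈ d, ∀ i : Fin n, (i : ℕ) < k → y ≠ Sum.inr i)
    (hs : Sig n k x d) : GG n false k x := by
  induction hDy generalizing x with
  | nil =>
    rw [sig_nil_inv hs]
    exact GG.dnil k
  | @node a ha d₁ d₂ h₁ h₂ ih₁ ih₂ =>
    obtain ⟨b, w', hb, hs', rfl⟩ := sig_cons_inv hs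
    obtain ⟨x₁, x₂', rfl, hsx₁, hsx₂'⟩ := sig_split hs'
    obtain ⟨b', x₂, hb', hsx₂, rfl⟩ := sig_cons_inv hsx₂'
    have hmem₁ : ∀ y ∈ d₁, ∀ i : Fin n, (i : ℕ) < k → y ≠ Sum.inr i := by
      intro y hy
      exact hav y (by simp [hy])
    have hmem₂ : ∀ y ∈ d₂, ∀ i : Fin n, (i : ℕ) < k → y ≠ Sum.inr i := by
      intro y hy
      exact hav y (by simp [hy])
    have ha' : ∀ i : Fin n, (i : ℕ) ≤ k → a ≠ Sum.inr i := by
      intro i hik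
      rcases Nat.lt_or_ge (i : ℕ) k with h' | h'
      · exact hav a (by simp) i h'
      · have : i = (⟨k, hk⟩ : Fin n) := Fin.ext (by simp only [Fin.val_mk]; omega)
        rw [this]
        exact ha
    have := GG.dcons k hk a ha' hb (ih₁ hmem₁ hsx₁) hb' (ih₂ hmem₂ hsx₂)
    simpa [List.append_assoc] using this

lemma in_lift {n k : ℕ} (hk : k < n) {w v₁ v' : List (Bool ⊕ Fin n)}
    (hin : In (Sum.inr (⟨k, hk⟩ : Fin n)) v₁ v') (hs : Sig n k w v₁)
    (hav : ∀ y ∈ v₁, ∀ i : Fin n, (i : ℕ) < k → y ≠ Sum.inr i) :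
    Sig n (k + 1) w v' := by
  induction hin generalizing w with
  | nil =>
    rw [sig_nil_inv hs]
    exact Sig.nil
  | @cons a ha d u v hd h ih =>
    obtain ⟨b, w', hb, hs', rfl⟩ := sig_cons_inv hs
    obtain ⟨xd, xu, rfl, hsxd, hsxu⟩ := sig_split hs'
    have hgd : GG n false k xd :=
      dyck_lift hk hd (fun y hy => hav y (by simp [hy])) hsxd
    have hnew : GG n true (k + 1) (b ++ xd) := GG.scons k hk hb hgd
    have hrec : Sig n (k + 1) xu v := ih hsxu (fun y hy => hav y (by simp [hy]))
    have := Sig.cons a hnew hrec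
    simpa [List.append_assoc] using this

lemma full_lift {n k : ℕ} (hk : k < n) {w v v' : List (Bool ⊕ Fin n)}
    (hfull : ∃ b w', GG n true k b ∧ Sig n k w' v ∧ w = b ++ w')
    (hav : ∀ y ∈ v, ∀ i : Fin n, (i : ℕ) < k → y ≠ Sum.inr i)
    (hfe : finErase (Sum.inr (⟨k, hk⟩ : Fin n)) v = some v') :
    ∃ b w', GG n true (k + 1) b ∧ Sig n (k + 1) w' v' ∧ w = b ++ w' := by
  obtain ⟨b, w', hb, hsig, rfl⟩ := hfull
  obtain ⟨dl, v₁, hDy, hIn, rfl⟩ := finErase_structure v v' hfe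
  obtain ⟨xd, x₁, rfl, hsxd, hsx₁⟩ := sig_split hsig
  have hgd : GG n false k xd :=
    dyck_lift hk hDy (fun y hy => hav y (by simp [hy])) hsxd
  refine ⟨b ++ xd, x₁, GG.scons k hk hb hgd, ?_, by simp⟩
  exact in_lift hk hIn hsx₁ (fun y hy => hav y (by simp [hy]))

lemma full_chain {n : ℕ} : ∀ k ≤ n, ∀ u v : List (Bool ⊕ Fin n),
    chainF ((E n).take k) u = some v →
    ∃ b w', GG n true k b ∧ Sig n k w' v ∧ u = b ++ w' := by
  intro k
  induction k with
  | zero =>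
    intro _ u v h
    simp only [List.take_zero, chainF_nil_es, Option.some.injEq] at h
    exact ⟨[], u, GG.snil, h ▸ sig_zero u, rfl⟩
  | succ k ih =>
    intro hk u v h
    have hkn : k < n := by omega
    rw [E_take_succ k hkn] at h
    rw [chainF_append] at h
    cases h1 : chainF ((E n).take k) u with
    | none => rw [h1] at h; simp at h
    | some v₁ =>
      rw [h1] at h
      simp only [Option.elim_some] at h
      have hfe : finErase (Sum.inr (⟨k, hkn⟩ : Fin n)) v₁ = some v := by
        rw [chainF_cons] at h
        cases h2 : finErase (Sum.inr (⟨k, hkn⟩ : Fin n)) v₁ with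
        | none => rw [h2] at h; simp at h
        | some v₂ =>
          rw [h2] at h
          simpa using h
      have hav : ∀ y ∈ v₁, ∀ i : Fin n, (i : ℕ) < k → y ≠ Sum.inr i := by
        intro y hy i hik heq
        rw [heq] at hy
        exact chainF_not_mem h1 (mem_E_take.mpr hik) hy
      exact full_lift hkn (ih (by omega) u v₁ h1) hav hfe

/-! ### The grammar -/

instance {T N : Type*} [DecidableEq T] [DecidableEq N] :
    DecidableEq (ContextFreeRule T N) := fun r₁ r₂ =>
  decidable_of_iff (r₁.input = r₂.input ∧ r₁.output = r₂.output)
    (by cases r₁; cases r₂; simp)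

/-- The string of nonterminals `D_0 D_1 … D_{k-1}`. -/
def Csyms (n k : ℕ) : List (Symbol (Bool ⊕ Fin n) (Fin n ⊕ Bool)) :=
  ((List.finRange n).take k).map (fun j => Symbol.nonterminal (Sum.inl j))

lemma Csyms_succ {n : ℕ} (k : ℕ) (hk : k < n) :
    Csyms n (k + 1) = Csyms n k ++ [Symbol.nonterminal (Sum.inl ⟨k, hk⟩)] := by
  unfold Csyms
  rw [List.take_succ, List.getElem?_eq_getElem (by simpa using hk)]
  rw [List.map_append]
  congr 1
  show List.map _ [(List.finRange n)[k]'(by simpa using hk)] = _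
  simp [List.getElem_finRange]

def ruleS (n : ℕ) : ContextFreeRule (Bool ⊕ Fin n) (Fin n ⊕ Bool) :=
  ⟨Sum.inr true, Csyms n n ++ [Symbol.nonterminal (Sum.inr false)]⟩

def ruleZ1 (n : ℕ) : ContextFreeRule (Bool ⊕ Fin n) (Fin n ⊕ Bool) :=
  ⟨Sum.inr false, Symbol.terminal (Sum.inl true) :: Csyms n n⟩

def ruleZ0 (n : ℕ) : ContextFreeRule (Bool ⊕ Fin n) (Fin n ⊕ Bool) :=
  ⟨Sum.inr false, Symbol.terminal (Sum.inl false) ::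
    (Csyms n n ++ [Symbol.nonterminal (Sum.inr false)])⟩

def ruleDnil (n : ℕ) (j : Fin n) : ContextFreeRule (Bool ⊕ Fin n) (Fin n ⊕ Bool) :=
  ⟨Sum.inl j, []⟩

def ruleDcons (n : ℕ) (j : Fin n) (a : Bool ⊕ Fin n) :
    ContextFreeRule (Bool ⊕ Fin n) (Fin n ⊕ Bool) :=
  ⟨Sum.inl j, Symbol.terminal a ::
    (Csyms n (j : ℕ) ++ [Symbol.nonterminal (Sum.inl j)] ++
      Symbol.terminal (Sum.inr j) ::
        (Csyms n (j : ℕ) ++ [Symbol.nonterminal (Sum.inl j)]))⟩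

def allowedL (n : ℕ) (j : Fin n) : List (Bool ⊕ Fin n) :=
  ((List.finRange n).map Sum.inr ++ [Sum.inl false, Sum.inl true]).filter
    (fun a => decide (∀ i : Fin n, (i : ℕ) ≤ (j : ℕ) → a ≠ Sum.inr i))

lemma mem_allowedL {n : ℕ} {j : Fin n} {a : Bool ⊕ Fin n} :
    a ∈ allowedL n j ↔ ∀ i : Fin n, (i : ℕ) ≤ (j : ℕ) → a ≠ Sum.inr i := by
  unfold allowedL
  rw [List.mem_filter]
  simp only [decide_eq_true_eq]
  constructor
  · exact fun h => h.2
  · intro h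
    refine ⟨?_, h⟩
    rcases a with b | i
    · rcases b with _ | _ <;> simp
    · simp

def rulesList (n : ℕ) : List (ContextFreeRule (Bool ⊕ Fin n) (Fin n ⊕ Bool)) :=
  ruleS n :: ruleZ1 n :: ruleZ0 n ::
    ((List.finRange n).map (ruleDnil n) ++
      (List.finRange n).flatMap (fun j => (allowedL n j).map (ruleDcons n j)))

abbrev gram (n : ℕ) : ContextFreeGrammar (Bool ⊕ Fin n) :=
  ⟨Fin n ⊕ Bool, Sum.inr true, (rulesList n).toFinset⟩

lemma mem_gram_rules {n : ℕ} {r : ContextFreeRule (Bool ⊕ Fin n) (Fin n ⊕ Bool)} :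
    r ∈ (gram n).rules ↔ r ∈ rulesList n := List.mem_toFinset

lemma derives_concat {n : ℕ} {s₁ s₂ t₁ t₂ : List (Symbol (Bool ⊕ Fin n) (gram n).NT)}
    (h₁ : (gram n).Derives s₁ t₁) (h₂ : (gram n).Derives s₂ t₂) :
    (gram n).Derives (s₁ ++ s₂) (t₁ ++ t₂) :=
  (h₁.append_right s₂).trans (h₂.append_left t₁)

lemma produce_single {n : ℕ} {r : ContextFreeRule (Bool ⊕ Fin n) (Fin n ⊕ Bool)}
    (hr : r ∈ rulesList n) :
    (gram n).Derives [Symbol.nonterminal r.input] r.output :=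
  ContextFreeGrammar.Produces.single ⟨r, mem_gram_rules.mpr hr, ContextFreeRule.Rewrites.input_output (r := r)⟩

lemma gg_derives {n : ℕ} {b : Bool} {j : ℕ} {w : List (Bool ⊕ Fin n)}
    (h : GG n b j w) :
    (b = false → ∀ hj : j < n,
      (gram n).Derives [Symbol.nonterminal (Sum.inl ⟨j, hj⟩)] (w.map Symbol.terminal)) ∧
    (b = true → (gram n).Derives (Csyms n j) (w.map Symbol.terminal)) := by
  induction h with
  | dnil j =>
    refine ⟨fun _ hj => ?_, fun hb => by simp at hb⟩
    have := produce_single (n := n) (r := ruleDnil n ⟨j, hj⟩)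
      (by unfold rulesList; simp [List.mem_flatMap])
    simpa [ruleDnil] using this
  | @dcons j hj a ha d w₁ d' w₂ hd h₁ hd' h₂ ihd ih₁ ihd' ih₂ =>
    refine ⟨fun _ _ => ?_, fun hb => by simp at hb⟩
    have hrule : ruleDcons n ⟨j, hj⟩ a ∈ rulesList n := by
      unfold rulesList
      simp only [List.mem_cons, List.mem_append, List.mem_map, List.mem_flatMap]
      refine Or.inr (Or.inr (Or.inr (Or.inr ⟨⟨j, hj⟩, List.mem_finRange _, ?_⟩)))
      exact ⟨a, mem_allowedL.mpr ha, rfl⟩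
    refine (produce_single hrule).trans ?_
    have hD := ihd.2 rfl
    have hW := ih₁.1 rfl hj
    have hD' := ihd'.2 rfl
    have hW' := ih₂.1 rfl hj
    have key := derives_concat (ContextFreeGrammar.Derives.refl
        [Symbol.terminal a])
      (derives_concat (derives_concat hD hW)
        (derives_concat (ContextFreeGrammar.Derives.refl
          [Symbol.terminal (Sum.inr (⟨j, hj⟩ : Fin n))])
          (derives_concat hD' hW')))
    unfold ruleDcons
    simpa [List.append_assoc] using key
  | snil =>
    refine ⟨fun hb => by simp at hb, fun _ => ?_⟩
    show (gram n).Derives (Csyms n 0) (List.map Symbol.terminal [])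
    simp only [Csyms, List.take_zero, List.map_nil]
    exact ContextFreeGrammar.Derives.refl []
  | scons k hk hd hr ihd ihr =>
    refine ⟨fun hb => by simp at hb, fun _ => ?_⟩
    rw [Csyms_succ k hk, List.map_append]
    exact derives_concat (ihd.2 rfl) (ihr.1 rfl hk)

lemma z_derives {n : ℕ} : ∀ (k : ℕ) (w : List (Bool ⊕ Fin n)),
    Sig n n w (List.replicate k (Sum.inl false) ++ [Sum.inl true]) →
    (gram n).Derives [Symbol.nonterminal (Sum.inr false)] (w.map Symbol.terminal) := by
  intro k
  induction k with
  | zero =>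
    intro w hs
    simp only [List.replicate_zero, List.nil_append] at hs
    obtain ⟨b, w', hb, hs', rfl⟩ := sig_cons_inv hs
    rw [sig_nil_inv hs'] at *
    refine (produce_single (by unfold rulesList; simp : ruleZ1 n ∈ rulesList n)).trans ?_
    have key := derives_concat (ContextFreeGrammar.Derives.refl
        [Symbol.terminal (Sum.inl true : Bool ⊕ Fin n)]) ((gg_derives hb).2 rfl)
    unfold ruleZ1
    simpa using key
  | succ k ih =>
    intro w hs
    simp only [List.replicate_succ, List.cons_append] at hs
    obtain ⟨b, w', hb, hs', rfl⟩ := sig_cons_inv hs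
    refine (produce_single (by unfold rulesList; simp : ruleZ0 n ∈ rulesList n)).trans ?_
    have key := derives_concat (ContextFreeGrammar.Derives.refl
        [Symbol.terminal (Sum.inl false : Bool ⊕ Fin n)])
      (derives_concat ((gg_derives hb).2 rfl) (ih w' hs'))
    unfold ruleZ0
    simpa [List.append_assoc] using key

lemma lword_complete {n : ℕ} {u : List (Bool ⊕ Fin n)} (h : u ∈ Lword n) :
    u ∈ (gram n).language := by
  obtain ⟨k, hk⟩ := mem_Lword_iff.mp h
  have htake : (E n).take n = E n := by
    exact List.take_of_length_le (by simp)
  obtain ⟨b, w', hb, hsig, rfl⟩ := full_chain n le_rfl u _ (by rw [htake]; exact hk)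
  show (gram n).Derives _ _
  refine (produce_single (by unfold rulesList; simp : ruleS n ∈ rulesList n)).trans ?_
  have key := derives_concat ((gg_derives hb).2 rfl) (z_derives k w' hsig)
  unfold ruleS
  simpa using key

/-! ### Soundness -/

def semNT (n : ℕ) : Fin n ⊕ Bool → Language (Bool ⊕ Fin n)
  | Sum.inl j => {w | chainF ((E n).take ((j : ℕ) + 1)) w = some []}
  | Sum.inr false => {w | ∃ k : ℕ,
      chainF (E n) w = some (List.replicate k (Sum.inl false) ++ [Sum.inl true])}
  | Sum.inr true => Lword n

def semS (n : ℕ) : Symbol (Bool ⊕ Fin n) (Fin n ⊕ Bool) → Language (Bool ⊕ Fin n)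
  | Symbol.terminal a => {[a]}
  | Symbol.nonterminal A => semNT n A

def semL (n : ℕ) (s : List (Symbol (Bool ⊕ Fin n) (Fin n ⊕ Bool))) :
    Language (Bool ⊕ Fin n) := (s.map (semS n)).prod

lemma semL_append (n : ℕ) (s t : List (Symbol (Bool ⊕ Fin n) (Fin n ⊕ Bool))) :
    semL n (s ++ t) = semL n s * semL n t := by
  unfold semL
  rw [List.map_append, List.prod_append]

lemma semL_singleton (n : ℕ) (x : Symbol (Bool ⊕ Fin n) (Fin n ⊕ Bool)) :
    semL n [x] = semS n x := by
  unfold semL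
  simp

lemma semL_cons (n : ℕ) (x : Symbol (Bool ⊕ Fin n) (Fin n ⊕ Bool))
    (s : List (Symbol (Bool ⊕ Fin n) (Fin n ⊕ Bool))) :
    semL n (x :: s) = semS n x * semL n s := by
  unfold semL
  rw [List.map_cons, List.prod_cons]

lemma semL_nil_mem {n : ℕ} {w : List (Bool ⊕ Fin n)} (h : w ∈ semL n []) : w = [] := h

lemma mem_semL_terminal (n : ℕ) (w : List (Bool ⊕ Fin n)) :
    w ∈ semL n (w.map Symbol.terminal) := by
  induction w with
  | nil => exact rfl
  | cons a w ih =>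
    rw [List.map_cons, semL_cons]
    exact ⟨[a], rfl, w, ih, rfl⟩

/-- Membership in the product over `Csyms n k` gives an erased-to-empty word. -/
lemma csyms_sound {n : ℕ} : ∀ k ≤ n, ∀ w ∈ semL n (Csyms n k),
    chainF ((E n).take k) w = some [] := by
  intro k
  induction k with
  | zero =>
    intro _ w hw
    have : w = [] := hw
    simp [this]
  | succ k ih =>
    intro hk w hw
    have hkn : k < n := by omega
    rw [Csyms_succ k hkn, semL_append, semL_singleton] at hw
    obtain ⟨w₁, hw₁, w₂, hw₂, rfl⟩ := hw
    have h₁ : chainF ((E n).take k) w₁ = some [] := ih (by omega) w₁ hw₁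
    have h₂ : chainF ((E n).take (k + 1)) w₂ = some [] := hw₂
    have h₁' : chainF ((E n).take (k + 1)) w₁ = some [] := by
      rw [E_take_succ k hkn, chainF_append_some h₁]
      simp
    have := chainF_concat h₁' h₂
    simpa using this

lemma chainF_split {B : Type*} [DecidableEq B] {es₁ es₂ : List B} {u v : List B}
    (h : chainF (es₁ ++ es₂) u = some v) :
    ∃ m, chainF es₁ u = some m ∧ chainF es₂ m = some v := by
  rw [chainF_append] at h
  cases h1 : chainF es₁ u with
  | none => rw [h1] at h; simp at h
  | some m => rw [h1] at h; exact ⟨m, rfl, by simpa using h⟩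

lemma not_inl_mem_E {n : ℕ} (b : Bool) (k : ℕ) :
    (Sum.inl b : Bool ⊕ Fin n) ∉ (E n).take k := by
  intro hc
  have := List.mem_of_mem_take hc
  simp [E] at this

lemma rule_sound {n : ℕ} {r : ContextFreeRule (Bool ⊕ Fin n) (Fin n ⊕ Bool)}
    (hr : r ∈ rulesList n) {w : List (Bool ⊕ Fin n)} (hw : w ∈ semL n r.output) :
    w ∈ semNT n r.input := by
  unfold rulesList at hr
  simp only [List.mem_cons, List.mem_append, List.mem_map, List.mem_flatMap] at hr
  have htake : (E n).take n = E n := List.take_of_length_le (by simp)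
  rcases hr with rfl | rfl | rfl | ⟨j, _, rfl⟩ | ⟨j, _, a, haL, rfl⟩
  · -- ruleS
    unfold ruleS at hw ⊢
    rw [semL_append, semL_singleton] at hw
    obtain ⟨w₁, hw₁, w₂, hw₂, rfl⟩ := hw
    obtain ⟨k, hk⟩ := hw₂
    have h₁ : chainF (E n) w₁ = some [] := by
      rw [← htake]; exact csyms_sound n le_rfl w₁ hw₁
    refine mem_Lword_iff.mpr ⟨k, ?_⟩
    have := chainF_concat h₁ hk
    simpa using this
  · -- ruleZ1
    unfold ruleZ1 at hw ⊢
    have : Symbol.terminal (Sum.inl true : Bool ⊕ Fin n) :: Csyms n n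
        = [Symbol.terminal (Sum.inl true)] ++ Csyms n n := rfl
    rw [this, semL_append, semL_singleton] at hw
    obtain ⟨w₁, hw₁, w₂, hw₂, rfl⟩ := hw
    obtain rfl : w₁ = [Sum.inl true] := hw₁
    have h₂ : chainF (E n) w₂ = some [] := by
      rw [← htake]; exact csyms_sound n le_rfl w₂ hw₂
    have h₁ : chainF (E n) [(Sum.inl true : Bool ⊕ Fin n)] = some [Sum.inl true] := by
      refine chainF_avoid ?_
      intro x hx hc
      rcases List.mem_singleton.mp hc with rfl
      simp [E] at hx
    refine ⟨0, ?_⟩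
    have := chainF_concat h₁ h₂
    simpa using this
  · -- ruleZ0
    unfold ruleZ0 at hw ⊢
    have : Symbol.terminal (Sum.inl false : Bool ⊕ Fin n) ::
        (Csyms n n ++ [Symbol.nonterminal (Sum.inr false)])
        = [Symbol.terminal (Sum.inl false)] ++ Csyms n n
          ++ [Symbol.nonterminal (Sum.inr false)] := by simp
    rw [this, semL_append, semL_append, semL_singleton, semL_singleton] at hw
    obtain ⟨w₀, hw₀, w₃, hw₃, rfl⟩ := hw
    obtain ⟨w₁, hw₁, w₂, hw₂, rfl⟩ := hw₀
    obtain rfl : w₁ = [Sum.inl false] := hw₁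
    obtain ⟨k, hk⟩ := hw₃
    have h₂ : chainF (E n) w₂ = some [] := by
      rw [← htake]; exact csyms_sound n le_rfl w₂ hw₂
    have h₁ : chainF (E n) [(Sum.inl false : Bool ⊕ Fin n)] = some [Sum.inl false] := by
      refine chainF_avoid ?_
      intro x hx hc
      rcases List.mem_singleton.mp hc with rfl
      simp [E] at hx
    refine ⟨k + 1, ?_⟩
    have := chainF_concat (chainF_concat h₁ h₂) hk
    simpa [List.replicate_succ] using this
  · -- ruleDnil
    unfold ruleDnil at hw ⊢
    obtain rfl : w = [] := hw
    show chainF _ _ = some []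
    simp
  · -- ruleDcons
    unfold ruleDcons at hw ⊢
    have ha : ∀ i : Fin n, (i : ℕ) ≤ (j : ℕ) → a ≠ Sum.inr i := mem_allowedL.mp haL
    have hshape : Symbol.terminal a ::
        (Csyms n (j : ℕ) ++ [Symbol.nonterminal (Sum.inl j)] ++
          Symbol.terminal (Sum.inr j) ::
            (Csyms n (j : ℕ) ++ [Symbol.nonterminal (Sum.inl j)]))
        = [Symbol.terminal a] ++ Csyms n (j : ℕ) ++ [Symbol.nonterminal (Sum.inl j)] ++
          [Symbol.terminal (Sum.inr j)] ++ Csyms n (j : ℕ) ++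
          [Symbol.nonterminal (Sum.inl j)] := by simp
    rw [hshape] at hw
    simp only [semL_append, semL_singleton] at hw
    obtain ⟨x₅, hx₅, w₂, hw₂, rfl⟩ := hw
    obtain ⟨x₄, hx₄, d', hd', rfl⟩ := hx₅
    obtain ⟨x₃, hx₃, we, hwe, rfl⟩ := hx₄
    obtain ⟨x₂, hx₂, w₁, hw₁, rfl⟩ := hx₃
    obtain ⟨x₁, hx₁, d, hd, rfl⟩ := hx₂
    obtain rfl : x₁ = [a] := hx₁
    obtain rfl : we = [Sum.inr j] := hwe
    -- chain evaluations of the pieces through the first j erasers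
    have hjn : (j : ℕ) < n := j.isLt
    have havoid : ∀ x ∈ (E n).take (j : ℕ), x ∉ [a] := by
      intro x hx hc
      rcases List.mem_singleton.mp hc with rfl
      rw [E, ← List.map_take, List.mem_map] at hx
      obtain ⟨i, _, rfl⟩ := hx
      exact ha i (by
        have : Sum.inr i ∈ (E n).take (j : ℕ) := by
          rw [E, ← List.map_take, List.mem_map]
          exact ⟨i, by assumption, rfl⟩
        exact le_of_lt (mem_E_take.mp this)) rfl
    have ca : chainF ((E n).take (j : ℕ)) [a] = some [a] := chainF_avoid havoid
    have ce : chainF ((E n).take (j : ℕ)) [(Sum.inr j : Bool ⊕ Fin n)]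
        = some [Sum.inr j] := by
      refine chainF_avoid ?_
      intro x hx hc
      rcases List.mem_singleton.mp hc with rfl
      have := mem_E_take.mp hx
      omega
    have cd : chainF ((E n).take (j : ℕ)) d = some [] := csyms_sound _ hjn.le d hd
    have cd' : chainF ((E n).take (j : ℕ)) d' = some [] := csyms_sound _ hjn.le d' hd'
    have hw₁' : chainF ((E n).take ((j : ℕ) + 1)) w₁ = some [] := hw₁
    have hw₂' : chainF ((E n).take ((j : ℕ) + 1)) w₂ = some [] := hw₂
    rw [E_take_succ (j : ℕ) hjn] at hw₁' hw₂'
    obtain ⟨m₁, cm₁, fm₁⟩ := chainF_split hw₁'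
    obtain ⟨m₂, cm₂, fm₂⟩ := chainF_split hw₂'
    have fm₁' : finErase (Sum.inr (⟨(j : ℕ), hjn⟩ : Fin n)) m₁ = some [] := by
      rw [chainF_cons] at fm₁
      cases hfe : finErase (Sum.inr (⟨(j : ℕ), hjn⟩ : Fin n)) m₁ with
      | none => rw [hfe] at fm₁; simp at fm₁
      | some v =>
        rw [hfe] at fm₁
        simp only [Option.elim_some, chainF_nil_es, Option.some.injEq] at fm₁
        rw [fm₁]
    have fm₂' : finErase (Sum.inr (⟨(j : ℕ), hjn⟩ : Fin n)) m₂ = some [] := by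
      rw [chainF_cons] at fm₂
      cases hfe : finErase (Sum.inr (⟨(j : ℕ), hjn⟩ : Fin n)) m₂ with
      | none => rw [hfe] at fm₂; simp at fm₂
      | some v =>
        rw [hfe] at fm₂
        simp only [Option.elim_some, chainF_nil_es, Option.some.injEq] at fm₂
        rw [fm₂]
    -- assemble
    have cwhole : chainF ((E n).take (j : ℕ)) ([a] ++ d ++ w₁ ++ [Sum.inr j] ++ d' ++ w₂)
        = some ([a] ++ [] ++ m₁ ++ [Sum.inr j] ++ [] ++ m₂) :=
      chainF_concat (chainF_concat (chainF_concat (chainF_concat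
        (chainF_concat ca cd) cm₁) ce) cd') cm₂
    show chainF ((E n).take ((j : ℕ) + 1)) _ = some []
    rw [E_take_succ (j : ℕ) hjn, chainF_append_some cwhole]
    have hje : (Sum.inr j : Bool ⊕ Fin n) = Sum.inr (⟨(j : ℕ), hjn⟩ : Fin n) := by
      congr 1
    have hane : a ≠ Sum.inr (⟨(j : ℕ), hjn⟩ : Fin n) := ha _ le_rfl
    have hnode : finErase (Sum.inr (⟨(j : ℕ), hjn⟩ : Fin n))
        (a :: (m₁ ++ Sum.inr (⟨(j : ℕ), hjn⟩ : Fin n) :: m₂)) = some [] :=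
      finErase_node hane fm₁' fm₂'
    have hform : [a] ++ [] ++ m₁ ++ [(Sum.inr j : Bool ⊕ Fin n)] ++ [] ++ m₂
        = a :: (m₁ ++ Sum.inr (⟨(j : ℕ), hjn⟩ : Fin n) :: m₂) := by
      rw [hje]; simp
    rw [hform]
    rw [chainF_cons_some (hje ▸ hnode)]
    rfl

lemma derives_sound {n : ℕ} {s t : List (Symbol (Bool ⊕ Fin n) (gram n).NT)}
    (h : (gram n).Derives s t) :
    ∀ w : List (Bool ⊕ Fin n), t = w.map Symbol.terminal → w ∈ semL n s := by
  induction h using Relation.ReflTransGen.head_induction_on with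
  | refl =>
    rintro w rfl
    exact mem_semL_terminal n w
  | head hp _ ih =>
    rintro w rfl
    obtain ⟨r, hr, hrw⟩ := hp
    obtain ⟨p, q, rfl, rfl⟩ := hrw.exists_parts
    have hw := ih w rfl
    rw [semL_append, semL_append] at hw ⊢
    obtain ⟨w₁, hw₁, w₂, hw₂, rfl⟩ := hw
    obtain ⟨w₃, hw₃, w₄, hw₄, rfl⟩ := hw₁
    refine ⟨w₃ ++ w₄, ⟨w₃, hw₃, w₄, ?_, rfl⟩, w₂, hw₂, rfl⟩
    rw [semL_singleton]
    exact rule_sound (mem_gram_rules.mp hr) hw₄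

theorem gram_language (n : ℕ) : (gram n).language = Lword n := by
  ext w
  constructor
  · intro hw
    have hder : (gram n).Derives [Symbol.nonterminal (gram n).initial]
        (w.map Symbol.terminal) := hw
    have := derives_sound hder w rfl
    rw [semL_singleton] at this
    exact this
  · exact lword_complete

end LwordCF

/-- For every `n ≥ 1` the language `L_n` is context-free. -/
theorem Lword_isContextFree : ∀ n : ℕ, 1 ≤ n → (Lword n).IsContextFree := by
  intro n _
  exact ⟨LwordCF.gram n, LwordCF.gram_language n⟩
end

section
/- Let Y = (L_∞ ∪ W)^ω and let Y_∞ be the set of all infinite words in Y containing infinitely many occurrences of wrong codes. Then Y_∞ is Π^0_2-complete: Y_∞ is a Π^0_2 subset of {0, 1, α, B, C, D, E, β}^ω and every Π^0_2 set over any finite alphabet Wadge-reduces to Y_∞ via a continuous map. In particular Y_∞ is Wadge equivalent to the set X of infinite binary words containing infinitely many 1s. -/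
open Set MeasureTheory

/-- `Y_∞` : the elements of `Y = (L_∞ ∪ W)^ω` containing infinitely many occurrences
of wrong codes. -/
def Yinfty : Set (ℕ → Gam) :=
  {x | x ∈ omegaPower Vlang ∧ {i | WrongAt x i}.Infinite}


/-! ### Auxiliary material for the proof -/

section Aux

open Classical

/-- Segment `x[a,b)` of an infinite word. -/
def seg {A : Type*} (x : ℕ → A) (a b : ℕ) : List A :=
  (List.range (b - a)).map fun j => x (a + j)

lemma seg_length {A : Type*} (x : ℕ → A) (a b : ℕ) : (seg x a b).length = b - a := by
  simp [seg]

lemma seg_append {A : Type*} {x : ℕ → A} {a b c : ℕ} (hab : a ≤ b) (hbc : b ≤ c) :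
    seg x a b ++ seg x b c = seg x a c := by
  unfold seg
  have h : c - a = (b - a) + (c - b) := by omega
  rw [h, List.range_add, List.map_append, List.map_map]
  congr 1
  apply List.map_congr_left
  intro j _
  simp only [Function.comp]
  congr 1
  omega

lemma seg_occurs {A : Type*} [Inhabited A] {v : List A} {x : ℕ → A} {i : ℕ}
    (h : OccursAt v x i) : seg x i (i + v.length) = v := by
  apply List.ext_getElem
  · simp [seg]
  · intro j h1 h2
    simp only [seg, Nat.add_sub_cancel_left, List.getElem_map, List.getElem_range] at h1 ⊢
    rw [h j h2, List.getD_eq_getElem _ _ h2]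

/-- A coordinatewise finitely-determined map between product spaces over discrete
alphabets is continuous. -/
lemma continuous_of_prefix_dep {A B : Type*} [TopologicalSpace A] [DiscreteTopology A]
    [TopologicalSpace B] {f : (ℕ → A) → (ℕ → B)}
    (h : ∀ m : ℕ, ∃ (n : ℕ) (F : (Fin n → A) → B), ∀ x, f x m = F (fun i => x i)) :
    Continuous f := by
  apply continuous_pi
  intro m
  obtain ⟨n, F, hF⟩ := h m
  have he : (fun x : ℕ → A => f x m) = F ∘ (fun x (i : Fin n) => x (i : ℕ)) := funext hF
  rw [he]
  exact continuous_of_discreteTopology.comp (continuous_pi fun i => continuous_apply _)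

lemma infinite_increases_iff_unbounded {c : ℕ → ℕ} (hc : Monotone c) :
    {m | c m < c (m + 1)}.Infinite ↔ ∀ r, ∃ m, r ≤ c m := by
  constructor
  · intro h r
    induction r with
    | zero => exact ⟨0, Nat.zero_le _⟩
    | succ r ih =>
      obtain ⟨m, hm⟩ := ih
      obtain ⟨p, hp, hmp⟩ := h.exists_gt m
      have h1 : c m ≤ c p := hc (le_of_lt hmp)
      exact ⟨p + 1, by have := hp; simp only [Set.mem_setOf_eq] at this; omega⟩
  · intro h
    by_contra hfin
    rw [Set.not_infinite] at hfin
    obtain ⟨M, hM⟩ := hfin.bddAbove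
    have hconst : ∀ m, M + 1 ≤ m → c m = c (M + 1) := by
      intro m hm
      induction m with
      | zero => omega
      | succ m ih =>
        rcases Nat.lt_or_ge m (M + 1) with h1 | h1
        · have h2 : m + 1 = M + 1 := by omega
          rw [h2]
        · have h2 : ¬ (c m < c (m + 1)) := by
            intro hlt
            have h5 : m ≤ M := hM hlt
            omega
          have h3 : c m ≤ c (m + 1) := hc (by omega)
          have h4 := ih h1
          show c (m + 1) = c (M + 1)
          omega
    obtain ⟨m, hm⟩ := h (c (M + 1) + 1)
    rcases Nat.lt_or_ge m (M + 1) with h1 | h1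
    · have := hc (le_of_lt h1); omega
    · rw [hconst m h1] at hm; omega

lemma findGreatest_congr {P Q : ℕ → Prop} [DecidablePred P] [DecidablePred Q]
    (h : ∀ r, P r ↔ Q r) (n : ℕ) : Nat.findGreatest P n = Nat.findGreatest Q n := by
  induction n with
  | zero => rfl
  | succ n ih =>
    rw [Nat.findGreatest_succ, Nat.findGreatest_succ, ih, if_congr (h (n + 1)) rfl rfl]

lemma sigmaFin_one (X : Type*) [TopologicalSpace X] : SigmaFin X 1 = {s | IsOpen s} := by
  rw [SigmaFin]

lemma sigmaFin_two (X : Type*) [TopologicalSpace X] :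
    SigmaFin X 2 = {s | ∃ (f : ℕ → Set X) (m : ℕ → Fin 2),
      (∀ k, 1 ≤ (m k : ℕ) ∧ (f k)ᶜ ∈ SigmaFin X (m k)) ∧ s = ⋃ k, f k} := by
  rw [SigmaFin]

lemma wadgeLE_trans {X Y Z : Type*} [TopologicalSpace X] [TopologicalSpace Y]
    [TopologicalSpace Z] {S : Set X} {T : Set Y} {R : Set Z}
    (h1 : WadgeLE S T) (h2 : WadgeLE T R) : WadgeLE S R := by
  obtain ⟨f, hf, hfe⟩ := h1
  obtain ⟨g, hg, hge⟩ := h2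
  exact ⟨g ∘ f, hg.comp hf, by rw [hfe, hge]; rfl⟩

/-- The stage-`p` counter. -/
noncomputable def cnt (G : ℕ → ℕ → Prop) (p : ℕ) : ℕ :=
  @Nat.findGreatest (fun r => ∀ k < r, ∃ n ≤ p, G k n) (Classical.decPred _) p

lemma cnt_spec (G : ℕ → ℕ → Prop) (p : ℕ) : ∀ k < cnt G p, ∃ n ≤ p, G k n := by
  have h0 : ∀ k < 0, ∃ n ≤ p, G k n := fun k hk => absurd hk (Nat.not_lt_zero k)
  exact @Nat.findGreatest_spec 0 (fun r => ∀ k < r, ∃ n ≤ p, G k n) (Classical.decPred _) p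
    (Nat.zero_le p) h0

lemma cnt_le_of (G : ℕ → ℕ → Prop) {r p : ℕ} (hrp : r ≤ p)
    (h : ∀ k < r, ∃ n ≤ p, G k n) : r ≤ cnt G p :=
  @Nat.le_findGreatest r (fun r => ∀ k < r, ∃ n ≤ p, G k n) (Classical.decPred _) p hrp h

lemma cnt_le_self (G : ℕ → ℕ → Prop) (p : ℕ) : cnt G p ≤ p :=
  @Nat.findGreatest_le (fun r => ∀ k < r, ∃ n ≤ p, G k n) (Classical.decPred _) p

lemma cnt_mono (G : ℕ → ℕ → Prop) : Monotone (cnt G) := by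
  intro p q hpq
  apply cnt_le_of G ((cnt_le_self G p).trans hpq)
  intro k hk
  obtain ⟨n, hn, hg⟩ := cnt_spec G p k hk
  exact ⟨n, hn.trans hpq, hg⟩

lemma cnt_congr {G G' : ℕ → ℕ → Prop} (p : ℕ) (h : ∀ k n, n ≤ p → (G k n ↔ G' k n)) :
    cnt G p = cnt G' p := by
  unfold cnt
  exact @findGreatest_congr _ _ (Classical.decPred _) (Classical.decPred _)
    (fun r => ⟨fun hh k hk => (hh k hk).imp fun n hn => ⟨hn.1, (h k n hn.1).mp hn.2⟩,
               fun hh k hk => (hh k hk).imp fun n hn => ⟨hn.1, (h k n hn.1).mpr hn.2⟩⟩) p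

/-- **Every `Π^0_2` set over a discrete-alphabet product space Wadge-reduces to the
set of binary words with infinitely many ones.** -/
lemma pi2_wadgeLE_infManyOnes (B : Type*) [TopologicalSpace B] [DiscreteTopology B]
    (T : Set (ℕ → B)) (hT : T ∈ PiFin (ℕ → B) 2) : WadgeLE T InfManyOnes := by
  classical
  have hT2 : Tᶜ ∈ SigmaFin (ℕ → B) 2 := hT
  rw [sigmaFin_two] at hT2
  obtain ⟨f, m, hfm, hTc⟩ := hT2
  set U : ℕ → Set (ℕ → B) := fun k => (f k)ᶜ with hU
  have hUopen : ∀ k, IsOpen (U k) := by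
    intro k
    have h1 := (hfm k).1
    have h2 := (hfm k).2
    have h3 : (m k : ℕ) = 1 := by have := (m k).isLt; omega
    rw [h3, sigmaFin_one] at h2
    exact h2
  have hTeq : T = ⋂ k, U k := by
    rw [← compl_compl T, hTc, Set.compl_iUnion]
  -- prefix-determined membership in open sets
  set good : (ℕ → B) → ℕ → ℕ → Prop :=
    fun x k n => ∀ y : ℕ → B, (∀ i < n, y i = x i) → y ∈ U k with hgood
  have hmemU : ∀ k (x : ℕ → B), x ∈ U k ↔ ∃ n, good x k n := by
    intro k x
    constructor
    · intro hx
      obtain ⟨I, u, hIu, hsub⟩ := isOpen_pi_iff.mp (hUopen k) x hx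
      refine ⟨(I.sup id) + 1, fun y hy => hsub (Set.mem_pi.mpr fun i hi => ?_)⟩
      have hmem : i ∈ I := hi
      rw [hy i (Nat.lt_succ_of_le (Finset.le_sup (f := id) hmem))]
      exact (hIu i hmem).2
    · rintro ⟨n, hn⟩
      exact hn x fun _ _ => rfl
  have hcdep : ∀ (x x' : ℕ → B) (p q : ℕ), q ≤ p → (∀ i < p, x i = x' i) →
      cnt (fun k n => good x k n) q = cnt (fun k n => good x' k n) q := by
    intro x x' p q hqp hagree
    apply cnt_congr
    intro k n hn
    constructor
    · intro hg y hy
      exact hg y fun i hi => (hy i hi).trans (hagree i (by omega)).symm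
    · intro hg y hy
      exact hg y fun i hi => (hy i hi).trans (hagree i (by omega))
  have hkey : ∀ x : ℕ → B, (∀ k, x ∈ U k) ↔
      {p | cnt (fun k n => good x k n) p < cnt (fun k n => good x k n) (p + 1)}.Infinite := by
    intro x
    refine Iff.trans ?_
      (infinite_increases_iff_unbounded (fun p q h => cnt_mono (fun k n => good x k n) h)).symm
    constructor
    · intro hx r
      choose nn hnn using fun k => (hmemU k x).mp (hx k)
      refine ⟨r + (Finset.range r).sup nn, cnt_le_of _ (Nat.le_add_right _ _) ?_⟩
      intro k hk
      exact ⟨nn k, le_trans (Finset.le_sup (Finset.mem_range.mpr hk)) (Nat.le_add_left _ _),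
        hnn k⟩
    · intro hub k
      obtain ⟨p, hp⟩ := hub (k + 1)
      obtain ⟨n, _, hg⟩ := cnt_spec (fun k n => good x k n) p k (by omega)
      exact (hmemU k x).mpr ⟨n, hg⟩
  refine ⟨fun x p => decide (cnt (fun k n => good x k n) p <
    cnt (fun k n => good x k n) (p + 1)), ?_, ?_⟩
  · apply continuous_of_prefix_dep
    intro p
    refine ⟨p + 2, fun z : Fin (p + 2) → B =>
      decide (cnt (fun k n => good (fun i => if h : i < p + 2 then z ⟨i, h⟩
          else z ⟨0, by omega⟩) k n) p <
        cnt (fun k n => good (fun i => if h : i < p + 2 then z ⟨i, h⟩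
          else z ⟨0, by omega⟩) k n) (p + 1)), ?_⟩
    intro x
    have hagree : ∀ i < p + 2, x i =
        (fun i' => if h : i' < p + 2 then x (⟨i', h⟩ : Fin (p + 2)).val else x 0) i := by
      intro i hi
      simp [hi]
    have h1 := hcdep x _ (p + 2) p (by omega) hagree
    have h2 := hcdep x _ (p + 2) (p + 1) (by omega) hagree
    simp only
    rw [h1, h2]
  · rw [hTeq]
    ext x
    simp only [Set.mem_iInter, Set.mem_preimage, InfManyOnes, Set.mem_setOf_eq]
    rw [hkey x]
    have hsets : {i | decide (cnt (fun k n => good x k n) i <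
        cnt (fun k n => good x k n) (i + 1)) = true} =
        {p | cnt (fun k n => good x k n) p < cnt (fun k n => good x k n) (p + 1)} := by
      ext p; simp
    rw [hsets]

/-! ### The characterization of `Y_∞` -/

lemma yinfty_eq : Yinfty = {x | {i | WrongAt x i}.Infinite} := by
  ext x
  constructor
  · exact fun h => h.2
  · intro h
    refine ⟨?_, h⟩
    have key : ∀ cc : ℕ, ∃ d, cc < d ∧ seg x cc d ∈ Wlang := by
      intro cc
      obtain ⟨i, hi, hci⟩ := Set.Infinite.exists_gt h cc
      obtain ⟨v, hv, hocc⟩ := hi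
      have hvne : v ≠ [] := by
        intro h0
        rw [h0] at hv
        exact absurd hv.1 (by simp)
      have hvpos : 0 < v.length := List.length_pos_iff.mpr hvne
      refine ⟨i + v.length, by omega, v, hv, seg x cc i, [], ?_⟩
      have hseg := seg_occurs hocc
      calc seg x cc i ++ v ++ []
          = seg x cc i ++ seg x i (i + v.length) := by rw [List.append_nil, hseg]
        _ = seg x cc (i + v.length) := seg_append (le_of_lt hci) (Nat.le_add_right _ _)
    choose next h1 h2 using key
    set d : ℕ → ℕ := fun n => Nat.rec 0 (fun _ prev => next prev) n with hd
    have hd0 : d 0 = 0 := rfl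
    have hdlt : ∀ n, d n < d (n + 1) := fun n => h1 (d n)
    have hflat : ∀ n,
        (((List.range n).map fun k => seg x (d k) (d (k + 1))).flatten) = seg x 0 (d n) := by
      intro n
      induction n with
      | zero => simp [seg, hd0]
      | succ n ih =>
        rw [List.range_succ, List.map_append, List.flatten_append, ih]
        simp only [List.map_cons, List.map_nil, List.flatten_cons, List.flatten_nil,
          List.append_nil]
        exact seg_append (Nat.zero_le _) (le_of_lt (hdlt n))
    refine ⟨fun n => seg x (d n) (d (n + 1)), fun n => ⟨Or.inr (h2 (d n)), ?_⟩, ?_⟩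
    · intro h0
      have hlen := congrArg List.length h0
      rw [seg_length] at hlen
      have := hdlt n
      simp at hlen
      omega
    · intro n
      rw [IsPrefixOfWord, hflat n]
      simp [seg]

lemma isOpen_occursAt {A : Type*} [Inhabited A] [TopologicalSpace A] [DiscreteTopology A]
    (v : List A) (i : ℕ) : IsOpen {x : ℕ → A | OccursAt v x i} := by
  have he : {x : ℕ → A | OccursAt v x i} =
      ⋂ j ∈ Finset.range v.length,
        (fun x : ℕ → A => x (i + j)) ⁻¹' {v.getD j default} := by
    ext x
    simp [OccursAt]
  rw [he]
  exact isOpen_biInter_finset fun j _ =>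
    (continuous_apply (i + j)).isOpen_preimage _ (isOpen_discrete _)

lemma yinfty_pifin : Yinfty ∈ PiFin (ℕ → Gam) 2 := by
  show Yinftyᶜ ∈ SigmaFin (ℕ → Gam) 2
  rw [sigmaFin_two]
  refine ⟨fun N => {x | ∀ i, N ≤ i → ¬ WrongAt x i}, fun _ => ⟨1, by omega⟩,
    fun N => ⟨le_refl 1, ?_⟩, ?_⟩
  · have he : {x : ℕ → Gam | ∀ i, N ≤ i → ¬ WrongAt x i}ᶜ =
        ⋃ (i : ℕ) (_ : N ≤ i) (v : List Gam) (_ : IsWrongCode v),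
          {x : ℕ → Gam | OccursAt v x i} := by
      ext x
      simp only [Set.mem_compl_iff, Set.mem_setOf_eq, Set.mem_iUnion]
      push_neg
      constructor
      · rintro ⟨i, hNi, v, hv, hocc⟩
        exact ⟨i, hNi, v, hv, hocc⟩
      · rintro ⟨i, hNi, v, hv, hocc⟩
        exact ⟨i, hNi, v, hv, hocc⟩
    have hopen : IsOpen ({x : ℕ → Gam | ∀ i, N ≤ i → ¬ WrongAt x i}ᶜ) := by
      rw [he]
      exact isOpen_iUnion fun i => isOpen_iUnion fun _ => isOpen_iUnion fun v =>
        isOpen_iUnion fun _ => isOpen_occursAt v i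
    show _ ∈ SigmaFin (ℕ → Gam) 1
    rw [sigmaFin_one]
    exact hopen
  · rw [yinfty_eq]
    ext x
    simp only [Set.mem_compl_iff, Set.mem_setOf_eq, Set.mem_iUnion]
    rw [Set.not_infinite]
    constructor
    · intro hfin
      obtain ⟨N, hN⟩ := hfin.bddAbove
      exact ⟨N + 1, fun i hi hw => by have := hN hw; omega⟩
    · rintro ⟨N, hN⟩
      apply (Set.finite_Iio N).subset
      intro i hi
      simp only [Set.mem_Iio]
      by_contra hcon
      exact hN i (by omega) hi

/-! ### The reduction from `InfManyOnes` to `Y_∞` -/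

/-- The block map: `0 ↦ 000`, `1 ↦ αβ0`. -/
def blockMap (y : ℕ → Bool) : ℕ → Gam := fun p =>
  if y (p / 3) = true then (if p % 3 = 0 then 2 else if p % 3 = 1 then 7 else 0) else 0

lemma isWrongCode_27 : IsWrongCode [2, 7] := by
  refine ⟨rfl, rfl, ?_⟩
  rintro ⟨j, hj, hje⟩
  have hlen : (eraserCode j).length = 4 * j + 2 := by
    simp [eraserCode]
    omega
  rw [← hje] at hlen
  simp at hlen
  omega

lemma infManyOnes_le_yinfty : WadgeLE InfManyOnes Yinfty := by
  refine ⟨blockMap, ?_, ?_⟩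
  · apply continuous_of_prefix_dep
    intro p
    refine ⟨p / 3 + 1, fun z : Fin (p / 3 + 1) → Bool =>
      if z ⟨p / 3, Nat.lt_succ_self _⟩ = true then
        (if p % 3 = 0 then 2 else if p % 3 = 1 then 7 else 0) else 0, fun y => rfl⟩
  · rw [yinfty_eq]
    ext y
    simp only [InfManyOnes, Set.mem_setOf_eq, Set.mem_preimage]
    constructor
    · intro hinf
      apply Set.Infinite.mono (s := (fun i => 3 * i) '' {i | y i = true})
      · rintro _ ⟨i, hi, rfl⟩
        refine ⟨[2, 7], isWrongCode_27, ?_⟩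
        intro j hj
        simp only [Set.mem_setOf_eq] at hi
        have hj2 : j < 2 := by simpa using hj
        interval_cases j
        · have h1 : (3 * i + 0) / 3 = i := by omega
          have h2 : (3 * i + 0) % 3 = 0 := by omega
          simp [blockMap, h1, h2, hi]
        · have h1 : (3 * i + 1) / 3 = i := by omega
          have h2 : (3 * i + 1) % 3 = 1 := by omega
          simp [blockMap, h1, h2, hi]
      · exact hinf.image (Set.injOn_of_injective fun a b hab =>
          mul_left_cancel₀ (by norm_num : (3 : ℕ) ≠ 0) hab)
    · intro hinf
      apply Set.Infinite.of_image (fun i => 3 * i)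
      apply Set.Infinite.mono _ hinf
      intro i hi
      obtain ⟨v, hv, hocc⟩ := hi
      have hvne : v ≠ [] := by
        intro h0
        rw [h0] at hv
        exact absurd hv.1 (by simp)
      have h0 : blockMap y i = 2 := by
        have hb := hocc 0 (List.length_pos_iff.mpr hvne)
        obtain ⟨a, t, rfl⟩ := List.exists_cons_of_ne_nil hvne
        have ha : a = 2 := by
          have := hv.1
          simpa using this
        rw [Nat.add_zero] at hb
        rw [hb, List.getD_cons_zero, ha]
      have hy : y (i / 3) = true ∧ i % 3 = 0 := by
        by_cases hyt : y (i / 3) = true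
        · refine ⟨hyt, ?_⟩
          unfold blockMap at h0
          rw [if_pos hyt] at h0
          split_ifs at h0 with hm1 hm2
          · exact hm1
          · exact absurd h0 (by decide)
          · exact absurd h0 (by decide)
        · unfold blockMap at h0
          rw [if_neg hyt] at h0
          exact absurd h0 (by decide)
      refine ⟨i / 3, hy.1, ?_⟩
      have h2 := hy.2
      show 3 * (i / 3) = i
      omega

end Aux

/-- `Y_∞` is `Π^0_2`-complete; in particular it is Wadge
equivalent to the set `X` of infinite binary words containing infinitely many `1`s. -/
theorem Yinfty_pi2_complete :
    PiFinComplete 2 Yinfty ∧ WadgeLE Yinfty InfManyOnes ∧ WadgeLE InfManyOnes Yinfty := by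
  refine ⟨⟨yinfty_pifin, ?_⟩, ?_, infManyOnes_le_yinfty⟩
  · intro B _ _ _ T hT
    exact wadgeLE_trans (pi2_wadgeLE_infManyOnes B T hT) infManyOnes_le_yinfty
  · exact pi2_wadgeLE_infManyOnes Gam Yinfty yinfty_pifin
end
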